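/- arXiv:1501.07704 — 2 statements merged into one kernel-verified Lean document; each statement's English description precedes it below -/
import Mathlib

section
/- Let π₁ be a trajectory that stays at point s on [t_s, t̄] and then follows a continuous path p : [0,1] → ℝ² with p(0) = s. If every other trajectory π_j (j in a finite index set) is g_j-terminal with terminal time at most t̄, each π_j avoids the point s with clearance r₁ + r_j on [t_s, t̄], each g_j ≠ s, and the image of p avoids D(g_j, r₁ + r_j) for all j, then π₁ is collision-free with every π_j on [t_s, ∞) for radii r₁ and r_j. -/
abbrev Plane := EuclideanSpace ℝ (Fin 2)

theorem wait_then_follow_path_collisionFree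
    {ι : Type*} [Fintype ι]
    (π₁ : ℝ → Plane) (s : Plane) (ts tbar : ℝ) (hts : ts ≤ tbar)
    (p : ℝ → Plane) (hp : Continuous p) (hp0 : p 0 = s)
    -- π₁ waits at s on [ts, tbar] and then follows the path p
    (hwait : ∀ t ∈ Set.Icc ts tbar, π₁ t = s)
    (hfollow : ∀ t : ℝ, tbar ≤ t → ∃ α ∈ Set.Icc (0:ℝ) 1, π₁ t = p α)
    (r₁ : ℝ) (r : ι → ℝ)
    (πj : ι → ℝ → Plane) (g : ι → Plane) (tg : ι → ℝ)
    -- each other trajectory is g_j-terminal with terminal time at most tbar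
    (htg : ∀ j, tg j ≤ tbar)
    (hterm : ∀ j, ∀ t : ℝ, tg j ≤ t → πj j t = g j)
    -- each π_j avoids the point s with clearance r₁ + r_j on [ts, tbar]
    (havoid : ∀ j, ∀ t ∈ Set.Icc ts tbar, r₁ + r j ≤ dist (πj j t) s)
    (hgs : ∀ j, g j ≠ s)
    -- the image of p avoids D(g_j, r₁ + r_j) for all j
    (hpath : ∀ j, ∀ α ∈ Set.Icc (0:ℝ) 1, p α ∉ Metric.closedBall (g j) (r₁ + r j)) :
    ∀ j, ∀ t : ℝ, ts ≤ t → r₁ + r j ≤ dist (π₁ t) (πj j t) := by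
  intro j t ht
  rcases le_or_gt t tbar with h | h
  · rw [hwait t ⟨ht, h⟩, dist_comm]
    exact havoid j t ⟨ht, h⟩
  · obtain ⟨α, hα, hπ⟩ := hfollow t h.le
    rw [hπ, hterm j t ((htg j).trans h.le)]
    have := hpath j α hα
    rw [Metric.mem_closedBall, not_le] at this
    exact this.le
end

section
/- Abstract single-step version of the token-time bound: let Φ be a finite multiset of real numbers (finish times), let τ be a time, let A = {f ∈ Φ : f ≥ τ}, and suppose max(A ∪ {τ}) ≤ τ + |A|·r for r > 0. If f₀ ∈ Φ satisfies f₀ < τ, and we set Φ' = Φ \ {f₀} ∪ {f*} where τ ≤ f* ≤ max(A ∪ {τ}) + r, then A' = {f ∈ Φ' : f ≥ τ} satisfies max(A' ∪ {τ}) ≤ τ + |A'|·r. -/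
theorem token_single_step_bound
    (Φ : Multiset ℝ) (τ r f₀ fstar : ℝ) (hr : 0 < r)
    (hΦ : ∀ x ∈ Φ, (0:ℝ) ≤ x)
    (hA : (Φ.filter (fun x => τ ≤ x)).fold max τ ≤ τ + (Φ.filter (fun x => τ ≤ x)).card * r)
    (hf₀ : f₀ ∈ Φ) (hf₀τ : f₀ < τ)
    (hfs₁ : τ ≤ fstar)
    (hfs₂ : fstar ≤ (Φ.filter (fun x => τ ≤ x)).fold max τ + r) :
    ((fstar ::ₘ Φ.erase f₀).filter (fun x => τ ≤ x)).fold max τ ≤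
      τ + ((fstar ::ₘ Φ.erase f₀).filter (fun x => τ ≤ x)).card * r := by
  classical
  have hΦe : Φ.filter (fun x => τ ≤ x) = (Φ.erase f₀).filter (fun x => τ ≤ x) := by
    conv_lhs => rw [← Multiset.cons_erase hf₀]
    exact Multiset.filter_cons_of_neg _ (not_le.mpr hf₀τ)
  rw [Multiset.filter_cons_of_pos _ hfs₁, Multiset.fold_cons_left, Multiset.card_cons, ← hΦe]
  push_cast
  have h1 : fstar ≤ τ + ((Φ.filter (fun x => τ ≤ x)).card + 1) * r := by nlinarith
  have h2 : (Φ.filter (fun x => τ ≤ x)).fold max τ ≤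
      τ + (((Φ.filter fun x => τ ≤ x)).card + 1) * r := by nlinarith
  exact max_le h1 h2
end
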